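/- arXiv:2009.10269 — 2 statements merged into one kernel-verified Lean document; each statement's English description precedes it below -/
import Mathlib

section
/- The dual assignment produced by the greedy algorithm is feasible for the dual LP: setting y_n = q_{n,i_n} for each winning user n, y_n = 0 for losing users, z = η_b·ψ̄ and t = η_a·ψ̄ with ψ̄ = κ·ψ, satisfies y_n + z·B_{ni} + t·A_{ni} ≥ q_{ni} for all users n and all bids i. -/
/-- The dual assignment produced by the greedy algorithm is feasible for the
dual LP: with y_n = q_{n,i_n} for winners, y_n = 0 for losers, z = η_b·ψ̄,
t = η_a·ψ̄, every dual constraint y_n + z·B_{ni} + t·A_{ni} ≥ q_{ni} holds. -/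
theorem greedy_dual_feasible
    {ι β : Type*} [Fintype ι] [Fintype β] [DecidableEq ι]
    (q B A : ι → β → ℝ) (ηb ηa κ ψbar : ℝ)
    (hηb : 0 < ηb) (hηa : 0 < ηa)
    (hBnn : ∀ n i, 0 ≤ B n i) (hAnn : ∀ n i, 0 ≤ A n i)
    (s : ι → β → ℝ) (hs : ∀ n i, s n i = ηb * B n i + ηa * A n i)
    (hspos : ∀ n i, 0 < s n i)
    (bi : ι → β)                       -- i_n : the best bid of user n
    (hbest : ∀ n i, q n i ≤ q n (bi n))
    (hκ : ∀ n i, s n (bi n) / s n i ≤ κ)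
    (W : Finset ι)                     -- the set of winning users
    (hψbar : 0 ≤ ψbar)
    (hloser : ∀ μ : ι, μ ∉ W → κ * (q μ (bi μ) / s μ (bi μ)) ≤ ψbar)
    (y : ι → ℝ) (hy : ∀ n, y n = if n ∈ W then q n (bi n) else 0)
    (z t : ℝ) (hz : z = ηb * ψbar) (ht : t = ηa * ψbar) :
    ∀ n i, q n i ≤ y n + z * B n i + t * A n i := by
  intro n i
  have hzt : z * B n i + t * A n i = ψbar * s n i := by
    rw [hz, ht, hs]; ring
  have hsnn : 0 ≤ ψbar * s n i :=
    mul_nonneg hψbar (hspos n i).le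
  by_cases hn : n ∈ W
  · have : y n = q n (bi n) := by rw [hy]; simp [hn]
    rw [this]
    linarith [hbest n i]
  · have hy0 : y n = 0 := by rw [hy]; simp [hn]
    rw [hy0]
    have hgoal : q n i ≤ ψbar * s n i → q n i ≤ 0 + z * B n i + t * A n i := by
      intro h; linarith
    apply hgoal
    by_cases hq : 0 ≤ q n (bi n)
    · have hψ := hloser n hn
      have h1 : s n (bi n) / s n i * (q n (bi n) / s n (bi n)) ≤ κ * (q n (bi n) / s n (bi n)) :=
        mul_le_mul_of_nonneg_right (hκ n i) (div_nonneg hq (hspos n (bi n)).le)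
      have heq : s n (bi n) / s n i * (q n (bi n) / s n (bi n)) = q n (bi n) / s n i := by
        have h := (hspos n (bi n)).ne'
        field_simp
      have h2 : q n (bi n) / s n i ≤ ψbar := by
        rw [← heq]; linarith
      have h3 : q n (bi n) ≤ ψbar * s n i := by
        rw [div_le_iff₀ (hspos n i)] at h2; linarith
      linarith [hbest n i]
    · linarith [hbest n i]
end

section
/- The greedy algorithm achieves approximation ratio at most 1 + κ·Υ/(Υ - S) for the social welfare maximization problem: OP ≤ (1 + κΥ/(Υ-S))·φ, where φ is the greedy solution's welfare, Υ = η_b·B_max + η_a·A_max, S = max_{n,i} s_{ni}, and κ = max s_{ni}/s_{ni'}, assuming Υ > S. -/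
/-- Approximation ratio of the greedy algorithm: under (a) the admitted bids'
total weighted size exceeds Υ − S, (b) the greedy dual assignment is feasible,
the welfare of any feasible integer solution is at most (1 + κΥ/(Υ−S))·φ,
where φ is the greedy welfare, Υ = η_b·B_max + η_a·A_max and S = max s_{ni}. -/
theorem greedy_approximation_ratio
    {ι β : Type*} [Fintype ι] [Fintype β] [DecidableEq ι]
    (q B A : ι → β → ℝ) (hq : ∀ n i, 0 ≤ q n i)
    (ηb ηa κ ψ Bmax Amax Υ S φ : ℝ)
    (hηb : 0 < ηb) (hηa : 0 < ηa) (hκ : 1 ≤ κ) (hψ : 0 ≤ ψ)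
    (s : ι → β → ℝ) (hsdef : ∀ n i, s n i = ηb * B n i + ηa * A n i)
    (hspos : ∀ n i, 0 < s n i)
    (hΥ : Υ = ηb * Bmax + ηa * Amax)
    (hS : ∀ n i, s n i ≤ S) (hSpos : 0 < S) (hΥS : S < Υ)
    (U : Finset ι) (bi : ι → β)
    (hφ : φ = ∑ n ∈ U, q n (bi n))
    -- winners' normalized values are at least the threshold ψ
    (hwin : ∀ n ∈ U, ψ ≤ q n (bi n) / s n (bi n))
    -- (a) greedy stops only when the admitted size exceeds Υ − S
    (hsize : Υ - S ≤ ∑ n ∈ U, s n (bi n))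
    -- (b) the greedy dual assignment is feasible
    (hdual : ∀ n i, q n i ≤ (if n ∈ U then q n (bi n) else 0)
        + (ηb * (κ * ψ)) * B n i + (ηa * (κ * ψ)) * A n i) :
    ∀ x : ι → β → ℝ,
      (∀ n i, x n i = 0 ∨ x n i = 1) →
      (∑ n, ∑ i, x n i * B n i ≤ Bmax) →
      (∑ n, ∑ i, x n i * A n i ≤ Amax) →
      (∀ n, ∑ i, x n i ≤ 1) →
      ∑ n, ∑ i, q n i * x n i ≤ (1 + κ * Υ / (Υ - S)) * φ := by
  intro x hx hB hA hone
  have hx0 : ∀ n i, 0 ≤ x n i := by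
    intro n i; rcases hx n i with h | h <;> rw [h] <;> norm_num
  set y : ι → ℝ := fun n => if n ∈ U then q n (bi n) else 0 with hy
  have hy0 : ∀ n, 0 ≤ y n := by
    intro n; simp only [hy]; split <;> first | exact hq _ _ | exact le_rfl
  -- φ ≥ ψ (Υ - S)
  have hφpsi : ψ * (Υ - S) ≤ φ := by
    calc ψ * (Υ - S) ≤ ψ * ∑ n ∈ U, s n (bi n) :=
          mul_le_mul_of_nonneg_left hsize hψ
      _ = ∑ n ∈ U, ψ * s n (bi n) := Finset.mul_sum _ _ _
      _ ≤ ∑ n ∈ U, q n (bi n) := by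
          refine Finset.sum_le_sum fun n hn => ?_
          have := hwin n hn
          rw [le_div_iff₀ (hspos n (bi n))] at this
          linarith
      _ = φ := hφ.symm
  have hφ0 : 0 ≤ φ := by
    rw [hφ]; exact Finset.sum_nonneg fun n _ => hq _ _
  -- pointwise dual bound times x
  have key : ∑ n, ∑ i, q n i * x n i ≤ φ + κ * ψ * Υ := by
    have step1 : ∑ n, ∑ i, q n i * x n i ≤
        ∑ n, ∑ i, (y n * x n i + (κ * ψ) * (x n i * s n i)) := by
      refine Finset.sum_le_sum fun n _ => Finset.sum_le_sum fun i _ => ?_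
      have hd := mul_le_mul_of_nonneg_right (hdual n i) (hx0 n i)
      simp only [hy]
      rw [hsdef n i]
      nlinarith [hd]
    have step2 : ∑ n, ∑ i, (y n * x n i + (κ * ψ) * (x n i * s n i))
        = (∑ n, y n * ∑ i, x n i) + (κ * ψ) *
            (ηb * (∑ n, ∑ i, x n i * B n i) + ηa * (∑ n, ∑ i, x n i * A n i)) := by
      have e1 : ∀ n i, y n * x n i + (κ * ψ) * (x n i * s n i)
          = y n * x n i + (κ * ψ * ηb) * (x n i * B n i)
            + (κ * ψ * ηa) * (x n i * A n i) := by
        intro n i; rw [hsdef]; ring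
      simp only [e1, Finset.sum_add_distrib, ← Finset.mul_sum]
      ring
    have hysum : ∑ n, y n * ∑ i, x n i ≤ φ := by
      calc ∑ n, y n * ∑ i, x n i ≤ ∑ n, y n := by
            refine Finset.sum_le_sum fun n _ => ?_
            have := mul_le_mul_of_nonneg_left (hone n) (hy0 n)
            simpa using this
        _ = φ := by
            simp only [hy, Finset.sum_ite_mem, Finset.univ_inter, hφ]
    have hres : ηb * (∑ n, ∑ i, x n i * B n i) + ηa * (∑ n, ∑ i, x n i * A n i) ≤ Υ := by
      rw [hΥ]
      have h1 := mul_le_mul_of_nonneg_left hB hηb.le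
      have h2 := mul_le_mul_of_nonneg_left hA hηa.le
      linarith
    have hκψ : 0 ≤ κ * ψ := mul_nonneg (by linarith) hψ
    calc ∑ n, ∑ i, q n i * x n i
        ≤ (∑ n, y n * ∑ i, x n i) + (κ * ψ) *
            (ηb * (∑ n, ∑ i, x n i * B n i) + ηa * (∑ n, ∑ i, x n i * A n i)) := by
          rw [← step2]; exact step1
      _ ≤ φ + κ * ψ * Υ := by
          have := mul_le_mul_of_nonneg_left hres hκψ
          linarith
  -- final comparison: κψΥ ≤ κΥ/(Υ-S) φ
  have hΥS0 : 0 < Υ - S := by linarith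
  have hΥ0 : 0 < Υ := by linarith
  have hκΥ : 0 ≤ κ * Υ := mul_nonneg (by linarith) hΥ0.le
  have hfin : κ * ψ * Υ ≤ κ * Υ / (Υ - S) * φ := by
    rw [div_mul_eq_mul_div, le_div_iff₀ hΥS0]
    nlinarith [mul_le_mul_of_nonneg_left hφpsi hκΥ]
  calc ∑ n, ∑ i, q n i * x n i ≤ φ + κ * ψ * Υ := key
    _ ≤ φ + κ * Υ / (Υ - S) * φ := by linarith
    _ = (1 + κ * Υ / (Υ - S)) * φ := by ring
end
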